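/- Let P be a continuous (atomless, with density positive at μ_k) probability measure on ℝⁿ. If M = {μ_1, ..., μ_k} with μ_k ∉ {μ_1, ..., μ_{k−1}} and P assigns positive mass to every ball of positive radius around μ_k, then J_cp({μ_1, ..., μ_{k−1}}, P) > J_cp({μ_1, ..., μ_k}, P). -/

import Mathlib

open MeasureTheory Metric

theorem kmeans_cost_strict_decrease_of_new_centre {n : ℕ}
    (P : Measure (EuclideanSpace ℝ (Fin n))) [IsProbabilityMeasure P] [NullSingletonClass P]
    (S : Finset (EuclideanSpace ℝ (Fin n))) (hS : S.Nonempty)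
    (c : EuclideanSpace ℝ (Fin n)) (hc : c ∉ S)
    (hball : ∀ ε : ℝ, 0 < ε → ε < infDist c (S : Set (EuclideanSpace ℝ (Fin n))) / 3 →
      0 < P (ball c ε))
    (h1 : Integrable (fun x => (infDist x (S : Set (EuclideanSpace ℝ (Fin n)))) ^ 2) P)
    (h2 : Integrable
      (fun x => (infDist x (insert c (S : Set (EuclideanSpace ℝ (Fin n))))) ^ 2) P) :
    ∫ x, (infDist x (insert c (S : Set (EuclideanSpace ℝ (Fin n))))) ^ 2 ∂P
      < ∫ x, (infDist x (S : Set (EuclideanSpace ℝ (Fin n)))) ^ 2 ∂P := by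
  set S' : Set (EuclideanSpace ℝ (Fin n)) := (S : Set (EuclideanSpace ℝ (Fin n))) with hS'def
  have hS' : S'.Nonempty := hS
  set d := infDist c S' with hd_def
  have hd : 0 < d := by
    rw [hd_def, ← (S.finite_toSet.isClosed).notMem_iff_infDist_pos hS']
    simpa using hc
  have hle : ∀ x, infDist x (insert c S') ≤ infDist x S' := fun x =>
    infDist_le_infDist_of_subset (Set.subset_insert _ _) hS'
  have key : 0 < ∫ x, ((infDist x S') ^ 2 - (infDist x (insert c S')) ^ 2) ∂P := by
    rw [integral_pos_iff_support_of_nonneg]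
    · refine lt_of_lt_of_le (hball (d/6) (by linarith) (by linarith)) (measure_mono ?_)
      intro x hx
      have hxc : dist x c < d / 6 := mem_ball.mp hx
      have h1' : infDist x (insert c S') ≤ dist x c :=
        infDist_le_dist_of_mem (Set.mem_insert _ _)
      have h2' : d - dist x c ≤ infDist x S' := by
        have := infDist_le_infDist_add_dist (x := c) (y := x) (s := S')
        rw [dist_comm] at this
        linarith
      have hlt : infDist x (insert c S') < infDist x S' := by linarith
      have : (infDist x (insert c S')) ^ 2 < (infDist x S') ^ 2 := by
        apply pow_lt_pow_left₀ hlt (infDist_nonneg) (by norm_num)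
      simp only [Function.mem_support]
      exact (sub_pos.mpr this).ne'
    · intro x
      simp only [Pi.zero_apply]
      have := hle x
      have h0 : (0:ℝ) ≤ infDist x (insert c S') := infDist_nonneg
      nlinarith
    · exact h1.sub h2
  have := integral_sub h1 h2
  rw [this] at key
  linarith
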